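/- For any two distinct vertices x and y of a graph G, fun(x) ≤ 1 + |N(x) ⊗ N(y)|, where N(x) ⊗ N(y) denotes the set of vertices different from x and y adjacent to exactly one of x and y; specifically, x is a function of {y} ∪ (N(x) ⊗ N(y)). -/
import Mathlib


open scoped Classical

/-- The Boolean adjacency indicator of a graph. -/
noncomputable def adjB {V : Type*} (G : SimpleGraph V) (x z : V) : Bool :=
  if G.Adj x z then true else false

/-- A vertex `y` is a function of the set `S` of vertices: there is a Boolean
function `f` of the variables indexed by `S` such that the adjacency of `y`
to any vertex `z` outside `{y} ∪ S` equals `f` applied to the adjacencies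
of the members of `S` to `z`. -/
def FunctionOf {V : Type*} (G : SimpleGraph V) (y : V) (S : Finset V) : Prop :=
  y ∉ S ∧ ∃ f : (S → Bool) → Bool, ∀ z, z ≠ y → z ∉ S →
    (G.Adj y z ↔ f (fun s => adjB G s.1 z) = true)

/-- `fun(y) ≤ k` : the functionality of vertex `y` is at most `k`. -/
def VertexFunLE {V : Type*} (G : SimpleGraph V) (y : V) (k : ℕ) : Prop :=
  ∃ S : Finset V, S.card ≤ k ∧ FunctionOf G y S


/-- `fun(x) ≤ 1 + |N(x) ⊗ N(y)|`: the vertex `x` is a function of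
`{y} ∪ (N(x) ⊗ N(y))`, where `N(x) ⊗ N(y)` is the set of vertices other than
`x, y` adjacent to exactly one of `x` and `y`. -/
theorem stmt3 {V : Type*} [Fintype V] (G : SimpleGraph V) (x y : V) (hxy : x ≠ y) :
    FunctionOf G x
      (insert y (Finset.univ.filter fun z => z ≠ x ∧ z ≠ y ∧ ¬ (G.Adj x z ↔ G.Adj y z))) ∧
    VertexFunLE G x
      (1 + (Finset.univ.filter fun z => z ≠ x ∧ z ≠ y ∧ ¬ (G.Adj x z ↔ G.Adj y z)).card) := by
  set D := Finset.univ.filter fun z => z ≠ x ∧ z ≠ y ∧ ¬ (G.Adj x z ↔ G.Adj y z) with hD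
  set S := insert y D with hS
  have hyS : y ∈ S := Finset.mem_insert_self y D
  have hxS : x ∉ S := by
    simp only [hS, Finset.mem_insert, hD, Finset.mem_filter]
    push_neg
    exact ⟨hxy, fun _ h => absurd rfl h⟩
  have hfo : FunctionOf G x S := by
    refine ⟨hxS, fun g => g ⟨y, hyS⟩, fun z hzx hzS => ?_⟩
    have hzy : z ≠ y := fun h => hzS (h ▸ hyS)
    have hzD : z ∉ D := fun h => hzS (Finset.mem_insert_of_mem h)
    have hiff : G.Adj x z ↔ G.Adj y z := by
      by_contra h
      exact hzD (by simp [hD, hzx, hzy, h])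
    simp only [hiff, adjB]
    constructor
    · intro h; simp [h]
    · intro h; by_contra h'; simp [h'] at h
  refine ⟨hfo, S, ?_, hfo⟩
  calc S.card ≤ D.card + 1 := Finset.card_insert_le y D
  _ = 1 + D.card := Nat.add_comm _ _
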